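/- The polynomial D(z) = (1-z)^9 - (135/16)(1-z)^6 z^2 + (60345/4096)(1-z)^3 z^4 - (53325/32768) z^6 is strictly decreasing on [0, 1/4], and hence attains its minimum on [0,1/4] at z = 1/4. -/

import Mathlib

open Set

/-- `D(z) = (1-z)^9 - (135/16)(1-z)^6 z^2 + (60345/4096)(1-z)^3 z^4
- (53325/32768) z^6` is strictly decreasing on `[0, 1/4]`, hence attains its
minimum on `[0,1/4]` at `z = 1/4`. -/
theorem stmt_15 :
    StrictAntiOn (fun z : ℝ =>
        (1 - z) ^ 9 - 135 / 16 * (1 - z) ^ 6 * z ^ 2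
          + 60345 / 4096 * (1 - z) ^ 3 * z ^ 4 - 53325 / 32768 * z ^ 6)
      (Icc 0 (1 / 4)) ∧
      ∀ z ∈ Icc (0 : ℝ) (1 / 4),
        (1 - (1 / 4 : ℝ)) ^ 9 - 135 / 16 * (1 - (1 / 4 : ℝ)) ^ 6 * (1 / 4 : ℝ) ^ 2
            + 60345 / 4096 * (1 - (1 / 4 : ℝ)) ^ 3 * (1 / 4 : ℝ) ^ 4
            - 53325 / 32768 * (1 / 4 : ℝ) ^ 6 ≤
          (1 - z) ^ 9 - 135 / 16 * (1 - z) ^ 6 * z ^ 2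
            + 60345 / 4096 * (1 - z) ^ 3 * z ^ 4 - 53325 / 32768 * z ^ 6 := by
  have hd : ∀ z : ℝ, HasDerivAt (fun z : ℝ =>
        (1 - z) ^ 9 - 135 / 16 * (1 - z) ^ 6 * z ^ 2
          + 60345 / 4096 * (1 - z) ^ 3 * z ^ 4 - 53325 / 32768 * z ^ 6)
      (-9*(1-z)^8 - 135/16*(2*z*(1-z)^6 - 6*z^2*(1-z)^5)
        + 60345/4096*(4*z^3*(1-z)^3 - 3*z^4*(1-z)^2) - 53325/32768*(6*z^5)) z := by
    intro z
    have h1 : HasDerivAt (fun z : ℝ => 1 - z) (-1) z := (hasDerivAt_id z).const_sub 1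
    have h := (((h1.pow 9).sub (((h1.pow 6).mul (hasDerivAt_pow 2 z)).const_mul
      (135/16))).add (((h1.pow 3).mul (hasDerivAt_pow 4 z)).const_mul
      (60345/4096))).sub ((hasDerivAt_pow 6 z).const_mul (53325/32768))
    convert h using 1
    · rfl
    · rfl
    · ext x; simp only [Pi.pow_apply, Pi.sub_apply, Pi.add_apply, Pi.mul_apply]; ring
    · push_cast; simp only [Pi.pow_apply]; ring
  have hanti : StrictAntiOn (fun z : ℝ =>
        (1 - z) ^ 9 - 135 / 16 * (1 - z) ^ 6 * z ^ 2
          + 60345 / 4096 * (1 - z) ^ 3 * z ^ 4 - 53325 / 32768 * z ^ 6)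
      (Icc 0 (1 / 4)) := by
    apply strictAntiOn_of_deriv_neg (convex_Icc 0 (1/4))
    · exact Continuous.continuousOn (by continuity)
    · intro x hx
      rw [interior_Icc] at hx
      rw [(hd x).deriv]
      obtain ⟨h0, h1⟩ := hx
      nlinarith [pow_pos (by linarith : (0:ℝ) < 1 - x) 5, sq_nonneg x, sq_nonneg (1-x),
        mul_pos h0 (by linarith : (0:ℝ) < 1 - 4*x), pow_pos h0 3, pow_pos h0 5,
        sq_nonneg (x*(1-x)), sq_nonneg (x^2*(1-x))]
  refine ⟨hanti, fun z hz => ?_⟩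
  rcases eq_or_lt_of_le hz.2 with h | h
  · rw [h]
  · exact le_of_lt (hanti hz (by constructor <;> norm_num) h)
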